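/- If G is a triangle-free connected graph, then a set S ⊆ V(G) is a general 2-position set if and only if S is a dissociation set; consequently gp_2(G) = diss(G). -/
import Mathlib


/-- `S` is a general `d`-position set of `G`: no three distinct vertices of `S`
lie on a common geodesic of length at most `d`. -/
def IsGenDPos {V : Type*} (G : SimpleGraph V) (d : ℕ) (S : Set V) : Prop :=
  ∀ ⦃u v w : V⦄, u ∈ S → v ∈ S → w ∈ S → u ≠ v → u ≠ w → v ≠ w →
    G.dist u v + G.dist v w = G.dist u w → G.dist u w ≤ d → False

/-- The general `d`-position number of `G`. -/
noncomputable def gpNum {V : Type*} (G : SimpleGraph V) (d : ℕ) : ℕ :=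
  sSup {n | ∃ S : Set V, IsGenDPos G d S ∧ S.ncard = n}

/-- S is a dissociation set: the subgraph induced by S has maximum degree at most 1. -/
def IsDissociation {V : Type*} (G : SimpleGraph V) (S : Set V) : Prop :=
  ∀ v ∈ S, {u | u ∈ S ∧ G.Adj v u}.Subsingleton

/-- The dissociation number of G. -/
noncomputable def dissNum {V : Type*} (G : SimpleGraph V) : ℕ :=
  sSup {n | ∃ S : Set V, IsDissociation G S ∧ S.ncard = n}

/-- In a triangle-free connected graph, general 2-position sets are exactly the
dissociation sets; consequently gp_2(G) = diss(G). -/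
theorem stmt_13 {V : Type*} [Finite V] (G : SimpleGraph V) (hG : G.Connected)
    (htf : G.CliqueFree 3) :
    (∀ S : Set V, IsGenDPos G 2 S ↔ IsDissociation G S) ∧ gpNum G 2 = dissNum G := by
  have key : ∀ S : Set V, IsGenDPos G 2 S ↔ IsDissociation G S := by
    intro S
    constructor
    · intro h v hv u ⟨huS, hvu⟩ w ⟨hwS, hvw⟩
      by_contra huw
      -- u, w distinct neighbors of v, all in S
      have hadj : ¬ G.Adj u w := by
        intro hadj
        classical
        exact htf {u, v, w} (SimpleGraph.is3Clique_triple_iff.mpr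
          ⟨hvu.symm, hadj, hvw⟩)
      have hne_uv : u ≠ v := fun e => G.irrefl (e ▸ hvu)
      have hne_vw : v ≠ w := fun e => G.irrefl (e ▸ hvw)
      have d1 : G.dist u v = 1 := SimpleGraph.dist_eq_one_iff_adj.mpr hvu.symm
      have d2 : G.dist v w = 1 := SimpleGraph.dist_eq_one_iff_adj.mpr hvw
      have duw : G.dist u w = 2 := by
        have hle : G.dist u w ≤ 2 := by
          calc G.dist u w ≤ G.dist u v + G.dist v w :=
                hG.dist_triangle
            _ = 2 := by rw [d1, d2]
        have h0 : G.dist u w ≠ 0 := fun e => huw (hG.dist_eq_zero_iff.mp e)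
        have h1 : G.dist u w ≠ 1 := fun e =>
          hadj (SimpleGraph.dist_eq_one_iff_adj.mp e)
        omega
      exact absurd (h huS hv hwS hne_uv huw hne_vw (by rw [d1, d2, duw])
        (by rw [duw])) (fun x => x)
    · intro h u v w huS hvS hwS huv huw hvw hsum hle
      have h0uv : G.dist u v ≠ 0 := fun e => huv (hG.dist_eq_zero_iff.mp e)
      have h0vw : G.dist v w ≠ 0 := fun e => hvw (hG.dist_eq_zero_iff.mp e)
      have d1 : G.dist u v = 1 := by omega
      have d2 : G.dist v w = 1 := by omega
      have a1 : G.Adj v u := (SimpleGraph.dist_eq_one_iff_adj.mp d1).symm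
      have a2 : G.Adj v w := SimpleGraph.dist_eq_one_iff_adj.mp d2
      exact huw (h v hvS ⟨huS, a1⟩ ⟨hwS, a2⟩)
  refine ⟨key, ?_⟩
  unfold gpNum dissNum
  congr 1
  ext n
  simp only [Set.mem_setOf_eq]
  exact ⟨fun ⟨S, hS, hn⟩ => ⟨S, (key S).mp hS, hn⟩,
    fun ⟨S, hS, hn⟩ => ⟨S, (key S).mpr hS, hn⟩⟩
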